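/- For all lists e (of length m) and f (of length n), the set of alignments of e and f is nonempty and finite, and δ m n is the minimum alignment cost: every alignment of e and f has cost at least δ m n, and some alignment of e and f has cost exactly δ m n. -/

import Mathlib

open scoped NNReal

namespace Stmt0

variable {E F : Type*}

/-- The log projection of a list of moves: first components that are not `none`. -/
def logProj (γ : List (Option E × Option F)) : List E := γ.filterMap Prod.fst

/-- The model projection of a list of moves: second components that are not `none`. -/
def modelProj (γ : List (Option E × Option F)) : List F := γ.filterMap Prod.snd

/-- `γ` is an alignment of `e` and `f`: a list of moves (no `(none, none)` pairs)
whose log projection is `e` and whose model projection is `f`. -/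
def IsAlignment (e : List E) (f : List F) (γ : List (Option E × Option F)) : Prop :=
  (∀ mv ∈ γ, mv ≠ (none, none)) ∧ logProj γ = e ∧ modelProj γ = f

/-- Cost of a single move. -/
def moveCost (PL : E → ℝ≥0) (PM : F → ℝ≥0) (Peq : E → F → ℝ≥0) :
    Option E × Option F → ℝ≥0
  | (some a, none) => PL a
  | (none, some b) => PM b
  | (some a, some b) => Peq a b
  | (none, none) => 0

/-- Cost of an alignment: sum of the costs of its moves. -/
def alignCost (PL : E → ℝ≥0) (PM : F → ℝ≥0) (Peq : E → F → ℝ≥0)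
    (γ : List (Option E × Option F)) : ℝ≥0 :=
  (γ.map (moveCost PL PM Peq)).sum

variable (PL : E → ℝ≥0) (PM : F → ℝ≥0) (Peq : E → F → ℝ≥0)

noncomputable def D : List E → List F → ℝ≥0
  | [], [] => 0
  | a :: e, [] => PL a + D e []
  | [], b :: f => PM b + D [] f
  | a :: e, b :: f =>
      min (Peq a b + D e f) (min (PL a + D e (b :: f)) (PM b + D (a :: e) f))
termination_by e f => e.length + f.length

lemma cost_cons (mv) (γ : List (Option E × Option F)) :
    alignCost PL PM Peq (mv :: γ) = moveCost PL PM Peq mv + alignCost PL PM Peq γ := by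
  simp [alignCost]

variable {PL PM Peq}

lemma align_cases {e : List E} {f : List F} {γ} (h : IsAlignment e f γ) :
    (e = [] ∧ f = [] ∧ γ = []) ∨
    (∃ a e' rest, e = a :: e' ∧ γ = (some a, none) :: rest ∧ IsAlignment e' f rest) ∨
    (∃ b f' rest, f = b :: f' ∧ γ = (none, some b) :: rest ∧ IsAlignment e f' rest) ∨
    (∃ a e' b f' rest, e = a :: e' ∧ f = b :: f' ∧ γ = (some a, some b) :: rest ∧
      IsAlignment e' f' rest) := by
  obtain ⟨hne, hl, hm⟩ := h
  match γ with
  | [] =>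
    left
    simp [logProj, modelProj] at hl hm
    exact ⟨hl, hm, rfl⟩
  | (o1, o2) :: rest =>
    match o1, o2 with
    | none, none => exact absurd rfl (hne _ (by simp))
    | some a, none =>
      right; left
      refine ⟨a, logProj rest, rest, ?_, rfl, fun mv hmv => hne mv (by simp [hmv]), rfl, ?_⟩
      · rw [← hl]; simp [logProj]
      · rw [← hm]; simp [modelProj]
    | none, some b =>
      right; right; left
      refine ⟨b, modelProj rest, rest, ?_, rfl, fun mv hmv => hne mv (by simp [hmv]), ?_, rfl⟩
      · rw [← hm]; simp [modelProj]
      · rw [← hl]; simp [logProj]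
    | some a, some b =>
      right; right; right
      refine ⟨a, logProj rest, b, modelProj rest, rest, ?_, ?_, rfl,
        fun mv hmv => hne mv (by simp [hmv]), rfl, rfl⟩
      · rw [← hl]; simp [logProj]
      · rw [← hm]; simp [modelProj]

lemma align_cons_log {e : List E} {f : List F} {γ} (a : E) (h : IsAlignment e f γ) :
    IsAlignment (a :: e) f ((some a, none) :: γ) := by
  obtain ⟨hne, hl, hm⟩ := h
  refine ⟨?_, ?_, ?_⟩
  · intro mv hmv
    rcases List.mem_cons.mp hmv with rfl | hmv
    · simp
    · exact hne _ hmv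
  · simp [logProj] at hl ⊢; exact hl
  · simp [modelProj] at hm ⊢; exact hm

lemma align_cons_model {e : List E} {f : List F} {γ} (b : F) (h : IsAlignment e f γ) :
    IsAlignment e (b :: f) ((none, some b) :: γ) := by
  obtain ⟨hne, hl, hm⟩ := h
  refine ⟨?_, ?_, ?_⟩
  · intro mv hmv
    rcases List.mem_cons.mp hmv with rfl | hmv
    · simp
    · exact hne _ hmv
  · simp [logProj] at hl ⊢; exact hl
  · simp [modelProj] at hm ⊢; exact hm

lemma align_cons_sync {e : List E} {f : List F} {γ} (a : E) (b : F)
    (h : IsAlignment e f γ) :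
    IsAlignment (a :: e) (b :: f) ((some a, some b) :: γ) := by
  obtain ⟨hne, hl, hm⟩ := h
  refine ⟨?_, ?_, ?_⟩
  · intro mv hmv
    rcases List.mem_cons.mp hmv with rfl | hmv
    · simp
    · exact hne _ hmv
  · simp [logProj] at hl ⊢; exact hl
  · simp [modelProj] at hm ⊢; exact hm

lemma D_cons_log_le (a : E) (e : List E) (f : List F) :
    D PL PM Peq (a :: e) f ≤ PL a + D PL PM Peq e f := by
  cases f with
  | nil => exact le_of_eq (by rw [D])
  | cons b f => rw [D]; exact le_trans (min_le_right _ _) (min_le_left _ _)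

lemma D_cons_model_le (b : F) (e : List E) (f : List F) :
    D PL PM Peq e (b :: f) ≤ PM b + D PL PM Peq e f := by
  cases e with
  | nil => exact le_of_eq (by rw [D])
  | cons a e => rw [D]; exact le_trans (min_le_right _ _) (min_le_right _ _)

lemma D_le_cost : ∀ (γ) (e : List E) (f : List F), IsAlignment e f γ →
    D PL PM Peq e f ≤ alignCost PL PM Peq γ := by
  intro γ
  induction γ with
  | nil =>
    intro e f h
    rcases align_cases h with ⟨he, hf, _⟩ | ⟨_, _, _, _, hγ, _⟩ | ⟨_, _, _, _, hγ, _⟩ |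
      ⟨_, _, _, _, _, _, _, hγ, _⟩ <;> try simp at hγ
    subst he; subst hf
    simp [alignCost, D]
  | cons mv rest ih =>
    intro e f h
    rcases align_cases h with ⟨_, _, hγ⟩ | ⟨a, e', rest', he, hγ, h'⟩ |
        ⟨b, f', rest', hf, hγ, h'⟩ | ⟨a, e', b, f', rest', he, hf, hγ, h'⟩
    · simp at hγ
    · obtain ⟨rfl, rfl⟩ : mv = (some a, none) ∧ rest = rest' := by
        constructor <;> [exact (List.cons.injEq _ _ _ _ ▸ hγ).1;
          exact (List.cons.injEq _ _ _ _ ▸ hγ).2]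
      subst he
      rw [cost_cons]
      calc D PL PM Peq (a :: e') f ≤ PL a + D PL PM Peq e' f := D_cons_log_le a e' f
        _ ≤ _ := by
          simp only [moveCost]
          exact add_le_add le_rfl (ih _ _ h')
    · obtain ⟨rfl, rfl⟩ : mv = (none, some b) ∧ rest = rest' := by
        constructor <;> [exact (List.cons.injEq _ _ _ _ ▸ hγ).1;
          exact (List.cons.injEq _ _ _ _ ▸ hγ).2]
      subst hf
      rw [cost_cons]
      calc D PL PM Peq e (b :: f') ≤ PM b + D PL PM Peq e f' := D_cons_model_le b e f'
        _ ≤ _ := by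
          simp only [moveCost]
          exact add_le_add le_rfl (ih _ _ h')
    · obtain ⟨rfl, rfl⟩ : mv = (some a, some b) ∧ rest = rest' := by
        constructor <;> [exact (List.cons.injEq _ _ _ _ ▸ hγ).1;
          exact (List.cons.injEq _ _ _ _ ▸ hγ).2]
      subst he; subst hf
      rw [cost_cons, D]
      calc min (Peq a b + D PL PM Peq e' f') _ ≤ Peq a b + D PL PM Peq e' f' :=
            min_le_left _ _
        _ ≤ _ := by
          simp only [moveCost]
          exact add_le_add le_rfl (ih _ _ h')

lemma exists_min : ∀ (N : ℕ) (e : List E) (f : List F), e.length + f.length ≤ N →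
    ∃ γ, IsAlignment e f γ ∧ alignCost PL PM Peq γ = D PL PM Peq e f := by
  intro N
  induction N with
  | zero =>
    intro e f h
    obtain ⟨rfl, rfl⟩ : e = [] ∧ f = [] := by
      constructor <;> [exact List.eq_nil_of_length_eq_zero (by omega);
        exact List.eq_nil_of_length_eq_zero (by omega)]
    exact ⟨[], ⟨by simp, rfl, rfl⟩, by simp [alignCost, D]⟩
  | succ N ih =>
    intro e f h
    match e, f with
    | [], [] => exact ⟨[], ⟨by simp, rfl, rfl⟩, by simp [alignCost, D]⟩
    | a :: e, [] =>
      obtain ⟨γ, hγ, hc⟩ := ih e [] (by simp at h ⊢; omega)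
      exact ⟨(some a, none) :: γ, align_cons_log a hγ,
        by rw [cost_cons, hc, D]; rfl⟩
    | [], b :: f =>
      obtain ⟨γ, hγ, hc⟩ := ih [] f (by simp at h ⊢; omega)
      exact ⟨(none, some b) :: γ, align_cons_model b hγ,
        by rw [cost_cons, hc, D]; rfl⟩
    | a :: e, b :: f =>
      obtain ⟨γ1, hγ1, hc1⟩ := ih e f (by simp at h ⊢; omega)
      obtain ⟨γ2, hγ2, hc2⟩ := ih e (b :: f) (by simp at h ⊢; omega)
      obtain ⟨γ3, hγ3, hc3⟩ := ih (a :: e) f (by simp at h ⊢; omega)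
      rcases min_choice (Peq a b + D PL PM Peq e f)
          (min (PL a + D PL PM Peq e (b :: f)) (PM b + D PL PM Peq (a :: e) f)) with h1 | h1
      · exact ⟨(some a, some b) :: γ1, align_cons_sync a b hγ1,
          by rw [cost_cons, hc1, D, h1]; rfl⟩
      · rcases min_choice (PL a + D PL PM Peq e (b :: f))
            (PM b + D PL PM Peq (a :: e) f) with h2 | h2
        · exact ⟨(some a, none) :: γ2, align_cons_log a hγ2,
            by rw [cost_cons, hc2, D, h1, h2]; rfl⟩
        · exact ⟨(none, some b) :: γ3, align_cons_model b hγ3,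
            by rw [cost_cons, hc3, D, h1, h2]; rfl⟩

lemma align_finite : ∀ (N : ℕ) (e : List E) (f : List F), e.length + f.length ≤ N →
    {γ : List (Option E × Option F) | IsAlignment e f γ}.Finite := by
  intro N
  induction N with
  | zero =>
    intro e f h
    obtain ⟨rfl, rfl⟩ : e = [] ∧ f = [] := by
      constructor <;> [exact List.eq_nil_of_length_eq_zero (by omega);
        exact List.eq_nil_of_length_eq_zero (by omega)]
    apply Set.Finite.subset (Set.finite_singleton ([] : List (Option E × Option F)))
    intro γ hγ
    rcases align_cases hγ with ⟨_, _, rfl⟩ | ⟨_, _, _, he, _, _⟩ | ⟨_, _, _, hf, _, _⟩ |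
      ⟨_, _, _, _, _, he, _, _, _⟩
    · rfl
    · simp at he
    · simp at hf
    · simp at he
  | succ N ih =>
    intro e f h
    match e, f with
    | [], [] =>
      apply Set.Finite.subset (Set.finite_singleton ([] : List (Option E × Option F)))
      intro γ hγ
      rcases align_cases hγ with ⟨_, _, rfl⟩ | ⟨_, _, _, he, _, _⟩ | ⟨_, _, _, hf, _, _⟩ |
        ⟨_, _, _, _, _, he, _, _, _⟩
      · rfl
      · simp at he
      · simp at hf
      · simp at he
    | a :: e, [] =>
      apply Set.Finite.subset (((ih e [] (by simp at h ⊢; omega)).image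
        (((some a, none) : Option E × Option F) :: ·)))
      intro γ hγ
      rcases align_cases hγ with ⟨he, _, _⟩ | ⟨a', e', rest, he, rfl, h'⟩ |
          ⟨_, _, _, hf, _, _⟩ | ⟨_, _, _, _, _, _, hf, _, _⟩
      · simp at he
      · obtain ⟨rfl, rfl⟩ := List.cons.injEq _ _ _ _ ▸ he
        exact ⟨rest, h', rfl⟩
      · simp at hf
      · simp at hf
    | [], b :: f =>
      apply Set.Finite.subset (((ih [] f (by simp at h ⊢; omega)).image
        (((none, some b) : Option E × Option F) :: ·)))
      intro γ hγ
      rcases align_cases hγ with ⟨_, hf, _⟩ | ⟨_, _, _, he, _, _⟩ |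
          ⟨b', f', rest, hf, rfl, h'⟩ | ⟨_, _, _, _, _, he, _, _, _⟩
      · simp at hf
      · simp at he
      · obtain ⟨rfl, rfl⟩ := List.cons.injEq _ _ _ _ ▸ hf
        exact ⟨rest, h', rfl⟩
      · simp at he
    | a :: e, b :: f =>
      have h1 := (ih e (b :: f) (by simp at h ⊢; omega)).image
        (((some a, none) : Option E × Option F) :: ·)
      have h2 := (ih (a :: e) f (by simp at h ⊢; omega)).image
        (((none, some b) : Option E × Option F) :: ·)
      have h3 := (ih e f (by simp at h ⊢; omega)).image
        (((some a, some b) : Option E × Option F) :: ·)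
      apply Set.Finite.subset ((h1.union h2).union h3)
      intro γ hγ
      rcases align_cases hγ with ⟨he, _, _⟩ | ⟨a', e', rest, he, rfl, h'⟩ |
          ⟨b', f', rest, hf, rfl, h'⟩ | ⟨a', e', b', f', rest, he, hf, rfl, h'⟩
      · simp at he
      · obtain ⟨rfl, rfl⟩ := List.cons.injEq _ _ _ _ ▸ he
        exact Or.inl (Or.inl ⟨rest, h', rfl⟩)
      · obtain ⟨rfl, rfl⟩ := List.cons.injEq _ _ _ _ ▸ hf
        exact Or.inl (Or.inr ⟨rest, h', rfl⟩)
      · obtain ⟨rfl, rfl⟩ := List.cons.injEq _ _ _ _ ▸ he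
        obtain ⟨rfl, rfl⟩ := List.cons.injEq _ _ _ _ ▸ hf
        exact Or.inr ⟨rest, h', rfl⟩


lemma align_reverse {e : List E} {f : List F} {γ} (h : IsAlignment e f γ) :
    IsAlignment e.reverse f.reverse γ.reverse := by
  obtain ⟨hne, hl, hm⟩ := h
  refine ⟨fun mv hmv => hne mv (List.mem_reverse.mp hmv), ?_, ?_⟩
  · show List.filterMap Prod.fst γ.reverse = e.reverse
    rw [List.filterMap_reverse]
    exact congrArg List.reverse hl
  · show List.filterMap Prod.snd γ.reverse = f.reverse
    rw [List.filterMap_reverse]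
    exact congrArg List.reverse hm

lemma cost_reverse (PL : E → ℝ≥0) (PM : F → ℝ≥0) (Peq : E → F → ℝ≥0) (γ) :
    alignCost PL PM Peq γ.reverse = alignCost PL PM Peq γ := by
  simp [alignCost, List.map_reverse, List.sum_reverse]


/-- For lists `e` (of length `m`) and `f` (of length `n`), the set of alignments of `e` and
`f` is nonempty and finite, and `δ m n` (defined by the edit-distance recurrence) is the
minimum alignment cost: every alignment costs at least `δ m n`, and some alignment costs
exactly `δ m n`. -/
theorem alignment_min_cost
    (PL : E → ℝ≥0) (PM : F → ℝ≥0) (Peq : E → F → ℝ≥0)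
    (e : List E) (f : List F)
    (δ : ℕ → ℕ → ℝ≥0)
    (h00 : δ 0 0 = 0)
    (hi0 : ∀ i (hi : i < e.length), δ (i + 1) 0 = PL (e[i]'hi) + δ i 0)
    (h0j : ∀ j (hj : j < f.length), δ 0 (j + 1) = PM (f[j]'hj) + δ 0 j)
    (hij : ∀ i j (hi : i < e.length) (hj : j < f.length),
      δ (i + 1) (j + 1) =
        min (Peq (e[i]'hi) (f[j]'hj) + δ i j)
          (min (PL (e[i]'hi) + δ i (j + 1)) (PM (f[j]'hj) + δ (i + 1) j))) :
    {γ : List (Option E × Option F) | IsAlignment e f γ}.Nonempty ∧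
    {γ : List (Option E × Option F) | IsAlignment e f γ}.Finite ∧
    (∀ γ, IsAlignment e f γ → δ e.length f.length ≤ alignCost PL PM Peq γ) ∧
    (∃ γ, IsAlignment e f γ ∧ alignCost PL PM Peq γ = δ e.length f.length) := by
  have etake : ∀ i (hi : i < e.length),
      (e.take (i + 1)).reverse = (e[i]'hi) :: (e.take i).reverse := by
    intro i hi
    rw [List.take_succ, List.getElem?_eq_getElem hi]
    simp
  have ftake : ∀ j (hj : j < f.length),
      (f.take (j + 1)).reverse = (f[j]'hj) :: (f.take j).reverse := by
    intro j hj
    rw [List.take_succ, List.getElem?_eq_getElem hj]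
    simp
  have hδ : ∀ i, i ≤ e.length → ∀ j, j ≤ f.length →
      δ i j = D PL PM Peq (e.take i).reverse (f.take j).reverse := by
    intro i
    induction i with
    | zero =>
      intro _ j
      induction j with
      | zero => intro _; simpa [D] using h00
      | succ j ihj =>
        intro hj
        have hj' : j < f.length := hj
        rw [h0j j hj', ihj (le_of_lt hj'), ftake j hj']
        simp only [List.take_zero, List.reverse_nil]
        rw [D]
    | succ i ihi =>
      intro hi j
      have hi' : i < e.length := hi
      induction j with
      | zero =>
        intro _
        rw [hi0 i hi', ihi (le_of_lt hi') 0 (Nat.zero_le _), etake i hi']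
        simp only [List.take_zero, List.reverse_nil]
        rw [D]
      | succ j ihj =>
        intro hj
        have hj' : j < f.length := hj
        rw [hij i j hi' hj', ihi (le_of_lt hi') (j + 1) hj,
          ihi (le_of_lt hi') j (le_of_lt hj'), ihj (le_of_lt hj'),
          etake i hi', ftake j hj']
        rw [D]
  have hD : δ e.length f.length = D PL PM Peq e.reverse f.reverse := by
    simpa using hδ e.length le_rfl f.length le_rfl
  obtain ⟨γ0, hγ0, hc0⟩ := exists_min (PL := PL) (PM := PM) (Peq := Peq)
    (e.length + f.length) e.reverse f.reverse (by simp)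
  have h1 : IsAlignment e f γ0.reverse := by
    have := align_reverse hγ0
    simpa using this
  refine ⟨⟨γ0.reverse, h1⟩, ?_, ?_, ⟨γ0.reverse, h1, ?_⟩⟩
  · apply Set.Finite.subset
      ((align_finite (e.length + f.length) e.reverse f.reverse (by simp)).image List.reverse)
    intro γ hγ
    exact ⟨γ.reverse, align_reverse hγ, by simp⟩
  · intro γ hγ
    rw [hD]
    have := D_le_cost (PL := PL) (PM := PM) (Peq := Peq) γ.reverse e.reverse f.reverse (align_reverse hγ)
    rwa [cost_reverse] at this
  · rw [cost_reverse, hc0, hD]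


end Stmt0
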